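/- Let U', g and J be as in the preceding statement (the hermitian structure of opposite orientation on the explicit Ricci-flat example). Then the fundamental 2-form ω(X,Y) = g(X, JY), which equals i[(v − 2z₂z̄₂)^{−1/2}·½·(dz̄₁ − 2z₂dz̄₂)∧(dz₁ − 2z̄₂dz₂) + 2(v − 2z₂z̄₂)^{1/2} dz₂∧dz̄₂], is a closed 2-form on U'; hence (U', g, J) is a Kähler structure. -/

import Mathlib

noncomputable section

/-- `w(z₁,z₂) = v − 2z₂z̄₂` where `v = z₁ + z̄₁ = 2 Re z₁`. -/
def wDef (p : ℂ × ℂ) : ℝ := 2 * p.1.re - 2 * Complex.normSq p.2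

/-- The region `U' = {(z₁,z₂) ∈ ℂ² : v − 2z₂z̄₂ > 0}`. -/
def Uprime : Set (ℂ × ℂ) := {p | 0 < wDef p}

/-- `K = log(v − 2z₂z̄₂)`. -/
def KDef (p : ℂ × ℂ) : ℝ := Real.log (wDef p)

/-- `K` as a function of `v` at fixed `z₂`. -/
def KofV (z₂ : ℂ) (v : ℝ) : ℝ := Real.log (v - 2 * Complex.normSq z₂)

/-- `K_v = ∂K/∂v`. -/
def Kv (p : ℂ × ℂ) : ℝ := deriv (KofV p.2) (2 * p.1.re)

/-- `K_vv = ∂²K/∂v²`. -/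
def Kvv (p : ℂ × ℂ) : ℝ := deriv (deriv (KofV p.2)) (2 * p.1.re)

/-- The Wirtinger derivative `∂G/∂z = ½(∂_x G − i ∂_y G)` of `G : ℂ → ℂ` at `c`. -/
def wirtD (G : ℂ → ℂ) (c : ℂ) : ℂ :=
  (deriv (fun x : ℝ => G ((x : ℂ) + (c.im : ℂ) * Complex.I)) c.re -
    Complex.I * deriv (fun y : ℝ => G ((c.re : ℂ) + (y : ℂ) * Complex.I)) c.im) / 2

/-- The Wirtinger derivative `∂G/∂z̄ = ½(∂_x G + i ∂_y G)` of `G : ℂ → ℂ` at `c`. -/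
def wirtDbar (G : ℂ → ℂ) (c : ℂ) : ℂ :=
  (deriv (fun x : ℝ => G ((x : ℂ) + (c.im : ℂ) * Complex.I)) c.re +
    Complex.I * deriv (fun y : ℝ => G ((c.re : ℂ) + (y : ℂ) * Complex.I)) c.im) / 2

/-- `K_{v2} = ∂²K/∂v∂z₂` (Wirtinger derivative in `z₂` of `K_v`). -/
def Kv2 (p : ℂ × ℂ) : ℂ :=
  wirtD (fun z₂ => ((deriv (KofV z₂) (2 * p.1.re) : ℝ) : ℂ)) p.2

/-- `K_{v2̄} = ∂²K/∂v∂z̄₂`. -/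
def Kv2bar (p : ℂ × ℂ) : ℂ :=
  wirtDbar (fun z₂ => ((deriv (KofV z₂) (2 * p.1.re) : ℝ) : ℂ)) p.2

/-- `K_{22̄} = ∂²K/∂z₂∂z̄₂` (at fixed `v`). -/
def K22bar (p : ℂ × ℂ) : ℂ :=
  wirtDbar (fun z₂ =>
    wirtD (fun u => ((Real.log (2 * p.1.re - 2 * Complex.normSq u) : ℝ) : ℂ)) z₂) p.2

/-- The 1-form `dz₁ − 2z̄₂dz₂` evaluated on a real tangent vector `X ∈ ℂ² ≅ ℝ⁴`. -/
def AForm (p : ℂ × ℂ) (X : ℂ × ℂ) : ℂ := X.1 - 2 * starRingEnd ℂ p.2 * X.2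

/-- The explicit Ricci-flat metric
`g = (v − 2z₂z̄₂)^{−1/2}(dz₁ − 2z̄₂dz₂)(dz̄₁ − 2z₂dz̄₂) + 4(v − 2z₂z̄₂)^{1/2} dz₂ dz̄₂`
(with `2αβ = α⊗β + β⊗α`) on real tangent vectors. -/
def gExpl (p : ℂ × ℂ) (X Y : ℂ × ℂ) : ℝ :=
  1 / Real.sqrt (wDef p) * (AForm p X * starRingEnd ℂ (AForm p Y)).re +
    4 * Real.sqrt (wDef p) * (X.2 * starRingEnd ℂ Y.2).re

/-- The almost complex structure
`J⁺_{e^{iφ}} = 2Re{ i e^{iφ} [ (2(v − 2z₂z̄₂)^{1/2})^{−1}(dz₁ − 2z̄₂dz₂) ⊗ (∂_{z̄₂} + 2z₂∂_{z̄₁}) − 2(v − 2z₂z̄₂)^{1/2} dz₂ ⊗ ∂_{z̄₁} ] }`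
as a real endomorphism of the tangent space `ℂ² ≅ ℝ⁴`: a real tangent vector `X`
corresponds to `X.1 ∂_{z₁} + conj X.1 ∂_{z̄₁} + X.2 ∂_{z₂} + conj X.2 ∂_{z̄₂}` in the
complexified tangent space; the components below are the `∂_{z₁}`- and
`∂_{z₂}`-coefficients of `(T + T̄)(X)`. -/
def JExpl (φ : ℝ) (p : ℂ × ℂ) (X : ℂ × ℂ) : ℂ × ℂ :=
  (starRingEnd ℂ (Complex.I * Complex.exp ((φ : ℂ) * Complex.I) *
      (AForm p X / (2 * (Real.sqrt (wDef p) : ℂ)) * (2 * p.2) -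
        2 * (Real.sqrt (wDef p) : ℂ) * X.2)),
   starRingEnd ℂ (Complex.I * Complex.exp ((φ : ℂ) * Complex.I) *
      (AForm p X / (2 * (Real.sqrt (wDef p) : ℂ)))))

/-- The hermitian structure (of the opposite orientation)
`J = i[(dz₁ − 2z̄₂dz₂)⊗∂_{z₁} − (dz̄₁ − 2z₂dz̄₂)⊗∂_{z̄₁} + dz̄₂⊗(∂_{z̄₂} + 2z₂∂_{z̄₁}) − dz₂⊗(∂_{z₂} + 2z̄₂∂_{z₁})]`
as a real endomorphism of the tangent space `ℂ² ≅ ℝ⁴`: a real tangent vector `X`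
corresponds to `X.1 ∂_{z₁} + conj X.1 ∂_{z̄₁} + X.2 ∂_{z₂} + conj X.2 ∂_{z̄₂}`; the
components below are the `∂_{z₁}`- and `∂_{z₂}`-coefficients of `J X` (the
`∂_{z̄}`-coefficients are their conjugates). -/
def JKah (p : ℂ × ℂ) (X : ℂ × ℂ) : ℂ × ℂ :=
  (Complex.I * AForm p X + (-Complex.I * X.2) * (2 * starRingEnd ℂ p.2),
   -Complex.I * X.2)

/-- The fundamental 2-form `ω(X,Y) = g(X, J Y)` of the Kähler structure. -/
def omegaKah (p : ℂ × ℂ) (X Y : ℂ × ℂ) : ℝ := gExpl p X (JKah p Y)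

namespace OmegaKahAux

lemma AForm_JKah (q Y : ℂ × ℂ) : AForm q (JKah q Y) = Complex.I * AForm q Y := by
  simp only [AForm, JKah]; ring

lemma omegaKah_eq (q X Y : ℂ × ℂ) :
    omegaKah q X Y =
      1 / Real.sqrt (wDef q) * (AForm q X * starRingEnd ℂ (AForm q Y)).im
        - 4 * Real.sqrt (wDef q) * (X.2 * starRingEnd ℂ Y.2).im := by
  have h2 : (JKah q Y).2 = -Complex.I * Y.2 := rfl
  simp only [omegaKah, gExpl, AForm_JKah, h2, map_mul, Complex.conj_I, map_neg]
  simp [Complex.mul_re, Complex.mul_im]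
  ring

lemma castlem (a b : ℝ) (α β u v : ℂ) :
    ((a * (α * starRingEnd ℂ β).im - 4 * b * (u * starRingEnd ℂ v).im : ℝ) : ℂ) =
      Complex.I * (((a : ℝ) : ℂ) * (1 / 2) *
          (starRingEnd ℂ α * β - α * starRingEnd ℂ β) +
        ((2 * b : ℝ) : ℂ) * (u * starRingEnd ℂ v - starRingEnd ℂ u * v)) := by
  set_option linter.unnecessarySeqFocus false in
  apply Complex.ext <;>
    simp [Complex.mul_re, Complex.mul_im, Complex.add_re, Complex.add_im] <;> ring

noncomputable def C2 : (ℂ × ℂ) →L[ℝ] ℂ :=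
  Complex.conjCLE.toContinuousLinearMap.comp (ContinuousLinearMap.snd ℝ ℂ ℂ)
noncomputable def S2 : (ℂ × ℂ) →L[ℝ] ℂ := ContinuousLinearMap.snd ℝ ℂ ℂ
noncomputable def R1 : (ℂ × ℂ) →L[ℝ] ℝ := Complex.reCLM.comp (ContinuousLinearMap.fst ℝ ℂ ℂ)
noncomputable def R2 : (ℂ × ℂ) →L[ℝ] ℝ := Complex.reCLM.comp (ContinuousLinearMap.snd ℝ ℂ ℂ)
noncomputable def I2 : (ℂ × ℂ) →L[ℝ] ℝ := Complex.imCLM.comp (ContinuousLinearMap.snd ℝ ℂ ℂ)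

lemma fderiv_omega_apply (X Y Z p : ℂ × ℂ) (hp : 0 < wDef p) :
    fderiv ℝ (fun q => omegaKah q X Y) p Z =
      -(2 * Z.1.re - 4 * (starRingEnd ℂ p.2 * Z.2).re) /
          (2 * Real.sqrt (wDef p) * wDef p) *
          (AForm p X * starRingEnd ℂ (AForm p Y)).im
        + 1 / Real.sqrt (wDef p) *
          ((-2 * starRingEnd ℂ Z.2 * X.2) * starRingEnd ℂ (AForm p Y)
            + AForm p X * starRingEnd ℂ (-2 * starRingEnd ℂ Z.2 * Y.2)).im
        - 4 * ((2 * Z.1.re - 4 * (starRingEnd ℂ p.2 * Z.2).re) /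
            (2 * Real.sqrt (wDef p))) * (X.2 * starRingEnd ℂ Y.2).im := by
  have hww : ∀ q : ℂ × ℂ,
      2 * q.1.re - 2 * (q.2.re * q.2.re + q.2.im * q.2.im) = wDef q := by
    intro q; simp [wDef, Complex.normSq_apply]
  have key : (fun q => omegaKah q X Y) = fun q : ℂ × ℂ =>
      (Real.sqrt (2 * q.1.re - 2 * (q.2.re * q.2.re + q.2.im * q.2.im)))⁻¹ *
          ((X.1 - C2 q * (2 * X.2)) *
            (starRingEnd ℂ Y.1 - S2 q * (2 * starRingEnd ℂ Y.2))).im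
        - 4 * Real.sqrt (2 * q.1.re - 2 * (q.2.re * q.2.re + q.2.im * q.2.im)) *
            (X.2 * starRingEnd ℂ Y.2).im := by
    funext q
    rw [omegaKah_eq, hww]
    have hA : starRingEnd ℂ (AForm q Y)
        = starRingEnd ℂ Y.1 - S2 q * (2 * starRingEnd ℂ Y.2) := by
      simp [AForm, S2, map_mul, map_ofNat]; ring
    have hB : AForm q X = X.1 - C2 q * (2 * X.2) := by
      simp [AForm, C2]; ring
    rw [hA, hB, one_div]
  have h1 : HasFDerivAt (fun q : ℂ × ℂ => q.1.re) R1 p := R1.hasFDerivAt (x := p)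
  have h2 : HasFDerivAt (fun q : ℂ × ℂ => q.2.re) R2 p := R2.hasFDerivAt (x := p)
  have h3 : HasFDerivAt (fun q : ℂ × ℂ => q.2.im) I2 p := I2.hasFDerivAt (x := p)
  have hw : HasFDerivAt
      (fun q : ℂ × ℂ => 2 * q.1.re - 2 * (q.2.re * q.2.re + q.2.im * q.2.im)) _ p :=
    (h1.const_mul 2).sub (((h2.mul h2).add (h3.mul h3)).const_mul 2)
  have hwp : wDef p ≠ 0 := ne_of_gt hp
  have hwp' : (2 * p.1.re - 2 * (p.2.re * p.2.re + p.2.im * p.2.im)) ≠ 0 := by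
    rw [hww]; exact hwp
  have hsp : Real.sqrt (2 * p.1.re - 2 * (p.2.re * p.2.re + p.2.im * p.2.im)) ≠ 0 := by
    rw [hww]; exact Real.sqrt_ne_zero'.mpr hp
  have hs : HasFDerivAt
      (fun q : ℂ × ℂ => Real.sqrt (2 * q.1.re - 2 * (q.2.re * q.2.re + q.2.im * q.2.im))) _ p :=
    hw.sqrt hwp'
  have hginv : HasDerivAt (fun t : ℝ => (Real.sqrt t)⁻¹)
      (-(1 / (2 * Real.sqrt (2 * p.1.re - 2 * (p.2.re * p.2.re + p.2.im * p.2.im)))) /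
        (Real.sqrt (2 * p.1.re - 2 * (p.2.re * p.2.re + p.2.im * p.2.im))) ^ 2)
      (2 * p.1.re - 2 * (p.2.re * p.2.re + p.2.im * p.2.im)) :=
    (Real.hasDerivAt_sqrt hwp').inv hsp
  have hinv : HasFDerivAt
      (fun q : ℂ × ℂ =>
        (Real.sqrt (2 * q.1.re - 2 * (q.2.re * q.2.re + q.2.im * q.2.im)))⁻¹) _ p :=
    (hginv.comp_hasFDerivAt p hw :)
  have hAX : HasFDerivAt (fun q : ℂ × ℂ => X.1 - C2 q * (2 * X.2)) _ p :=
    (hasFDerivAt_const X.1 p).sub ((C2.hasFDerivAt (x := p)).mul_const (2 * X.2))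
  have hBY : HasFDerivAt
      (fun q : ℂ × ℂ => starRingEnd ℂ Y.1 - S2 q * (2 * starRingEnd ℂ Y.2)) _ p :=
    (hasFDerivAt_const (starRingEnd ℂ Y.1) p).sub
      ((S2.hasFDerivAt (x := p)).mul_const (2 * starRingEnd ℂ Y.2))
  have hprod := hAX.mul hBY
  have him : HasFDerivAt
      (fun q : ℂ × ℂ => ((X.1 - C2 q * (2 * X.2)) *
        (starRingEnd ℂ Y.1 - S2 q * (2 * starRingEnd ℂ Y.2))).im) _ p :=
    (Complex.imCLM.hasFDerivAt (x := _)).comp p hprod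
  have H : HasFDerivAt (fun q : ℂ × ℂ =>
      (Real.sqrt (2 * q.1.re - 2 * (q.2.re * q.2.re + q.2.im * q.2.im)))⁻¹ *
          ((X.1 - C2 q * (2 * X.2)) *
            (starRingEnd ℂ Y.1 - S2 q * (2 * starRingEnd ℂ Y.2))).im
        - 4 * Real.sqrt (2 * q.1.re - 2 * (q.2.re * q.2.re + q.2.im * q.2.im)) *
            (X.2 * starRingEnd ℂ Y.2).im) _ p :=
    (hinv.mul him).sub ((hs.const_mul 4).mul_const ((X.2 * starRingEnd ℂ Y.2).im))
  rw [key, H.fderiv]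
  simp only [ContinuousLinearMap.sub_apply, ContinuousLinearMap.add_apply,
    ContinuousLinearMap.smul_apply, ContinuousLinearMap.comp_apply,
    ContinuousLinearMap.coe_comp', Function.comp_apply, ContinuousLinearMap.coe_smul',
    Pi.smul_apply, ContinuousLinearMap.zero_apply, smul_eq_mul,
    ContinuousLinearMap.coe_sub', Pi.sub_apply, Pi.add_apply,
    ContinuousLinearMap.smulRight_apply, ContinuousLinearMap.one_apply]
  rw [hww p]
  simp only [R1, R2, I2, S2, C2, ContinuousLinearMap.coe_comp', Function.comp_apply,
    Complex.reCLM_apply, Complex.imCLM_apply, ContinuousLinearMap.coe_fst',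
    ContinuousLinearMap.coe_snd', Complex.conjCLE_apply, ContinuousLinearEquiv.coe_coe]
  have hs0 : Real.sqrt (wDef p) ≠ 0 := Real.sqrt_ne_zero'.mpr hp
  simp only [AForm, Complex.mul_im, Complex.mul_re, Complex.sub_im, Complex.sub_re,
    Complex.add_im, Complex.add_re, Complex.conj_re, Complex.conj_im, Complex.zero_im,
    Complex.zero_re, Complex.re_ofNat, Complex.im_ofNat, Complex.neg_re, Complex.neg_im,
    zero_sub, neg_mul, neg_neg, zero_mul, mul_zero, sub_zero, zero_add, add_zero, neg_zero,
    zero_div]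
  set s := Real.sqrt (wDef p) with hsdef
  rw [show wDef p = s * s from (Real.mul_self_sqrt hp.le).symm]
  field_simp
  ring

lemma omega_closed (p : ℂ × ℂ) (hp : 0 < wDef p) (X Y Z : ℂ × ℂ) :
    fderiv ℝ (fun q => omegaKah q Y Z) p X +
      fderiv ℝ (fun q => omegaKah q Z X) p Y +
      fderiv ℝ (fun q => omegaKah q X Y) p Z = 0 := by
  rw [fderiv_omega_apply Y Z X p hp, fderiv_omega_apply Z X Y p hp,
    fderiv_omega_apply X Y Z p hp]
  have hs0 : Real.sqrt (wDef p) ≠ 0 := Real.sqrt_ne_zero'.mpr hp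
  simp only [AForm, Complex.mul_im, Complex.mul_re, Complex.sub_im, Complex.sub_re,
    Complex.add_im, Complex.add_re, Complex.conj_re, Complex.conj_im, Complex.zero_im,
    Complex.zero_re, Complex.re_ofNat, Complex.im_ofNat, Complex.neg_re, Complex.neg_im,
    zero_sub, neg_mul, neg_neg, zero_mul, mul_zero, sub_zero, zero_add, add_zero, neg_zero,
    zero_div]
  set s := Real.sqrt (wDef p) with hsdef
  rw [show wDef p = s * s from (Real.mul_self_sqrt hp.le).symm]
  field_simp
  ring

end OmegaKahAux

/-- The fundamental 2-form `ω(X,Y) = g(X, JY)` equals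
`i[(v − 2z₂z̄₂)^{−1/2}·½·(dz̄₁ − 2z₂dz̄₂)∧(dz₁ − 2z̄₂dz₂) + 2(v − 2z₂z̄₂)^{1/2} dz₂∧dz̄₂]`
(with `(α∧β)(X,Y) = α(X)β(Y) − β(X)α(Y)`), and it is closed on `U'` (the cyclic sum of
directional derivatives of its coefficients vanishes); hence `(U', g, J)` is Kähler. -/


theorem omegaKah_formula_closed :
    (∀ p ∈ Uprime, ∀ X Y : ℂ × ℂ,
      ((omegaKah p X Y : ℝ) : ℂ) =
        Complex.I *
          (((1 / Real.sqrt (wDef p) : ℝ) : ℂ) * (1 / 2) *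
              (starRingEnd ℂ (AForm p X) * AForm p Y -
                AForm p X * starRingEnd ℂ (AForm p Y)) +
            ((2 * Real.sqrt (wDef p) : ℝ) : ℂ) *
              (X.2 * starRingEnd ℂ Y.2 - starRingEnd ℂ X.2 * Y.2))) ∧
    (∀ p ∈ Uprime, ∀ X Y Z : ℂ × ℂ,
      fderiv ℝ (fun q => omegaKah q Y Z) p X +
        fderiv ℝ (fun q => omegaKah q Z X) p Y +
        fderiv ℝ (fun q => omegaKah q X Y) p Z = 0) := by
  constructor
  · intro p hp X Y
    rw [OmegaKahAux.omegaKah_eq]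
    exact OmegaKahAux.castlem (1 / Real.sqrt (wDef p)) (Real.sqrt (wDef p))
      (AForm p X) (AForm p Y) X.2 Y.2
  · intro p hp X Y Z
    exact OmegaKahAux.omega_closed p hp X Y Z
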